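/- Let L : Λ²(ℝ^8) → Λ²(ℝ^8) be the linear map L(α) = *(Φ₀ ∧ α), where Φ₀ is the standard Cayley form and * the standard Hodge star. Then L satisfies the quadratic relation L² = 2L + 3·Id, equivalently (L − 3·Id)∘(L + Id) = 0. -/
import Mathlib

set_option maxRecDepth 100000
set_option maxHeartbeats 4000000


open Finset

noncomputable section

/-- Exterior algebra of ℝ⁸ in coefficients on the orthonormal coframe `e^1,…,e^8`:
a (possibly inhomogeneous) form is a coefficient function on index sets. -/
abbrev Forms8 : Type := Finset (Fin 8) → ℝ

/-- Sign `(-1)^{#inversions}` of merging two (disjoint) increasing index sets. -/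
def csign (s t : Finset (Fin 8)) : ℝ :=
  (-1 : ℝ) ^ (((s ×ˢ t).filter fun p => p.2 < p.1).card)

/-- Wedge product of forms. -/
def wedge (α β : Forms8) : Forms8 := fun u =>
  ∑ s ∈ u.powerset, csign s (u \ s) * α s * β (u \ s)

/-- Hodge star for the standard Euclidean metric and the orientation `e^{12345678}`. -/
def hodge (α : Forms8) : Forms8 := fun u => csign uᶜ u * α uᶜ

/-- The basis form `e^S` (indices increasing). -/
def bE (s : Finset (Fin 8)) : Forms8 := fun u => if u = s then 1 else 0

/-- `α` is homogeneous of degree `k`. -/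
def isDeg (k : ℕ) (α : Forms8) : Prop := ∀ s : Finset (Fin 8), s.card ≠ k → α s = 0

/-- The standard Cayley 4-form `Φ₀` (indices `1,…,8` rendered as `0,…,7`). -/
def Phi0 : Forms8 :=
  bE {0,1,2,3} + bE {0,1,4,5} + bE {0,1,6,7} + bE {0,2,4,6}
  - bE {0,2,5,7} - bE {0,3,4,7} - bE {0,3,5,6}
  + bE {4,5,6,7} + bE {2,3,6,7} + bE {2,3,4,5} + bE {1,3,5,7}
  - bE {1,3,4,6} - bE {1,2,5,6} - bE {1,2,4,7}
/-- The operator `L(α) = ⋆(Φ₀ ∧ α)` on 2-forms. -/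
def Lop (α : Forms8) : Forms8 := hodge (wedge Phi0 α)

/-! ### Integer-valued auxiliary versions -/

def csZ (s t : Finset (Fin 8)) : ℤ :=
  (-1 : ℤ) ^ (((s ×ˢ t).filter fun p => p.2 < p.1).card)

def bZ (s u : Finset (Fin 8)) : ℤ := if u = s then 1 else 0

def phiZ (u : Finset (Fin 8)) : ℤ :=
  bZ {0,1,2,3} u + bZ {0,1,4,5} u + bZ {0,1,6,7} u + bZ {0,2,4,6} u
  - bZ {0,2,5,7} u - bZ {0,3,4,7} u - bZ {0,3,5,6} u
  + bZ {4,5,6,7} u + bZ {2,3,6,7} u + bZ {2,3,4,5} u + bZ {1,3,5,7} u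
  - bZ {1,3,4,6} u - bZ {1,2,5,6} u - bZ {1,2,4,7} u

def Kz (u t : Finset (Fin 8)) : ℤ :=
  if t ⊆ uᶜ then csZ uᶜ u * csZ (uᶜ \ t) t * phiZ (uᶜ \ t) else 0

def twoSets : Finset (Finset (Fin 8)) := Finset.univ.filter (fun s => s.card = 2)

lemma csign_cast (s t : Finset (Fin 8)) : csign s t = (csZ s t : ℝ) := by
  simp [csign, csZ]

lemma Phi0_cast (u : Finset (Fin 8)) : Phi0 u = (phiZ u : ℝ) := by
  simp [Phi0, phiZ, bE, bZ, apply_ite (Int.cast : ℤ → ℝ)]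

theorem phiZ_supp : ∀ s : Finset (Fin 8), s.card ≠ 4 → phiZ s = 0 := by decide

theorem key : ∀ u ∈ twoSets, ∀ r ∈ twoSets,
    ∑ t ∈ twoSets, Kz u t * Kz t r = 2 * Kz u r + 3 * (if r = u then 1 else 0) := by
  decide

lemma Kz_zero_of_card (u t : Finset (Fin 8)) (hu : u.card ≠ 2) (ht : t.card = 2) :
    Kz u t = 0 := by
  unfold Kz
  split_ifs with h
  · have hc : (uᶜ \ t).card = 6 - u.card := by
      rw [card_sdiff_of_subset h, card_compl, ht]
      simp [Fintype.card_fin]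
      omega
    have h4 : (uᶜ \ t).card ≠ 4 := by
      have hu8 : u.card ≤ 8 := by
        simpa using card_le_card (subset_univ u)
      omega
    rw [phiZ_supp _ h4, mul_zero]
  · rfl

/-- Expansion of `Lop` on degree-2 forms as a matrix acting on coefficients. -/
lemma Lop_expand (α : Forms8) (hα : isDeg 2 α) (u : Finset (Fin 8)) :
    Lop α u = ∑ t ∈ twoSets, (Kz u t : ℝ) * α t := by
  have h1 : Lop α u
      = ∑ s ∈ uᶜ.powerset, csign uᶜ u * (csign s (uᶜ \ s) * Phi0 s * α (uᶜ \ s)) := by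
    simp [Lop, hodge, wedge, mul_sum]
  rw [h1]
  have h2 : ∑ s ∈ uᶜ.powerset, csign uᶜ u * (csign s (uᶜ \ s) * Phi0 s * α (uᶜ \ s))
      = ∑ t ∈ uᶜ.powerset, (Kz u t : ℝ) * α t := by
    refine Finset.sum_nbij' (fun s => uᶜ \ s) (fun t => uᶜ \ t) ?_ ?_ ?_ ?_ ?_
    · intro s hs; exact mem_powerset.mpr (sdiff_subset)
    · intro t ht; exact mem_powerset.mpr (sdiff_subset)
    · intro s hs
      exact Finset.sdiff_sdiff_eq_self (mem_powerset.mp hs)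
    · intro t ht
      exact Finset.sdiff_sdiff_eq_self (mem_powerset.mp ht)
    · intro s hs
      have hsub : s ⊆ uᶜ := mem_powerset.mp hs
      have h3 : uᶜ \ (uᶜ \ s) = s := Finset.sdiff_sdiff_eq_self hsub
      have h4 : uᶜ \ s ⊆ uᶜ := sdiff_subset
      rw [Kz, if_pos h4, h3]
      push_cast
      rw [csign_cast, csign_cast, Phi0_cast]
      ring
  rw [h2]
  -- extend / restrict the index set: both sides equal the sum over univ
  have h5 : ∑ t ∈ uᶜ.powerset, (Kz u t : ℝ) * α t
      = ∑ t ∈ (Finset.univ : Finset (Finset (Fin 8))), (Kz u t : ℝ) * α t := by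
    refine Finset.sum_subset (subset_univ _) ?_
    intro t _ ht
    have : Kz u t = 0 := by
      rw [Kz, if_neg (by simpa [mem_powerset] using ht)]
    rw [this]; push_cast; ring
  have h6 : ∑ t ∈ twoSets, (Kz u t : ℝ) * α t
      = ∑ t ∈ (Finset.univ : Finset (Finset (Fin 8))), (Kz u t : ℝ) * α t := by
    refine Finset.sum_subset (subset_univ _) ?_
    intro t _ ht
    have : α t = 0 := hα t (by simpa [twoSets] using ht)
    rw [this, mul_zero]
  rw [h5, ← h6]

lemma Lop_isDeg (α : Forms8) (hα : isDeg 2 α) : isDeg 2 (Lop α) := by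
  intro u hu
  rw [Lop_expand α hα u]
  refine Finset.sum_eq_zero fun t ht => ?_
  rw [Kz_zero_of_card u t hu (by simpa [twoSets] using ht)]
  push_cast; ring


/-- On 2-forms, `L² = 2L + 3·Id`, equivalently `(L − 3·Id)∘(L + Id) = 0`. -/
theorem Lop_quadratic_relation :
    ∀ α : Forms8, isDeg 2 α →
      Lop (Lop α) = (2 : ℝ) • Lop α + (3 : ℝ) • α := by
  intro α hα
  funext u
  have hL : isDeg 2 (Lop α) := Lop_isDeg α hα
  by_cases hu : u.card = 2
  · have huT : u ∈ twoSets := by simp [twoSets, hu]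
    have hLL : Lop (Lop α) u = ∑ t ∈ twoSets, (Kz u t : ℝ) * Lop α t :=
      Lop_expand (Lop α) hL u
    have step : Lop (Lop α) u
        = ∑ r ∈ twoSets, (∑ t ∈ twoSets, (Kz u t : ℝ) * (Kz t r : ℝ)) * α r := by
      rw [hLL]
      have : ∀ t ∈ twoSets, (Kz u t : ℝ) * Lop α t
          = ∑ r ∈ twoSets, (Kz u t : ℝ) * ((Kz t r : ℝ) * α r) := by
        intro t _
        rw [Lop_expand α hα t, mul_sum]
      rw [Finset.sum_congr rfl this, Finset.sum_comm]
      refine Finset.sum_congr rfl fun r _ => ?_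
      rw [sum_mul]
      refine Finset.sum_congr rfl fun t _ => ?_
      ring
    rw [step]
    have keyR : ∀ r ∈ twoSets,
        (∑ t ∈ twoSets, (Kz u t : ℝ) * (Kz t r : ℝ))
          = 2 * (Kz u r : ℝ) + 3 * (if r = u then 1 else 0) := by
      intro r hr
      have := key u huT r hr
      have : ((∑ t ∈ twoSets, Kz u t * Kz t r : ℤ) : ℝ)
          = ((2 * Kz u r + 3 * (if r = u then 1 else 0) : ℤ) : ℝ) := by
        exact_mod_cast congrArg (Int.cast : ℤ → ℝ) this
      push_cast at this
      simpa using this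
    have hcong : ∑ r ∈ twoSets, (∑ t ∈ twoSets, (Kz u t : ℝ) * (Kz t r : ℝ)) * α r
        = ∑ r ∈ twoSets, (2 * (Kz u r : ℝ) + 3 * (if r = u then 1 else 0)) * α r :=
      Finset.sum_congr rfl fun r hr => by rw [keyR r hr]
    rw [hcong]
    have expand2 : ∑ r ∈ twoSets,
        (2 * (Kz u r : ℝ) + 3 * (if r = u then 1 else 0)) * α r
        = 2 * (∑ r ∈ twoSets, (Kz u r : ℝ) * α r) + 3 * α u := by
      rw [Finset.sum_congr rfl (fun r _ => by split_ifs <;> ring :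
        ∀ r ∈ twoSets, (2 * (Kz u r : ℝ) + 3 * (if r = u then 1 else 0)) * α r
          = 2 * ((Kz u r : ℝ) * α r) + (if r = u then 3 * α r else 0))]
      rw [Finset.sum_add_distrib, ← mul_sum, Finset.sum_ite_eq' twoSets u (fun r => 3 * α r)]
      simp [huT]
    rw [expand2, ← Lop_expand α hα u]
    simp [Pi.add_apply, Pi.smul_apply, smul_eq_mul]
  · have h1 : Lop (Lop α) u = 0 := Lop_isDeg (Lop α) hL u hu
    have h2 : Lop α u = 0 := hL u hu
    have h3 : α u = 0 := hα u hu
    simp [h1, h2, h3]
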